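/- Let M ∈ ℤ^{d×d} be regular. The space of translates of the Dirichlet kernel coincides with the space of trigonometric polynomials with frequencies in the generating set: V_M^{D_M} = span{T(y)D_M : y ∈ P(M)} = span{ e^{i h·x} : h ∈ G(M^T) }. Consequently, approximation in V_M^{D_M} corresponds to truncation of Fourier series to the frequencies G(M^T). -/

import Mathlib

open MeasureTheory Complex Matrix
open scoped BigOperators Classical

noncomputable section

namespace ElastFFT

variable (d : ℕ)

/-- Real action of an integer matrix on a real vector. -/
def mulVecR (M : Matrix (Fin d) (Fin d) ℤ) (y : Fin d → ℝ) : Fin d → ℝ :=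
  (M.map (Int.cast : ℤ → ℝ)).mulVec y

/-- The lattice Λ(M) = M⁻¹ ℤ^d. -/
def lattice (M : Matrix (Fin d) (Fin d) ℤ) : Set (Fin d → ℝ) :=
  {y | ∃ z : Fin d → ℤ, mulVecR d M y = fun i => (z i : ℝ)}

/-- The pattern P(M) = Λ(M) ∩ [-1/2, 1/2)^d. -/
def pattern (M : Matrix (Fin d) (Fin d) ℤ) : Set (Fin d → ℝ) :=
  {y | y ∈ lattice d M ∧ ∀ i, y i ∈ Set.Ico (-(1/2) : ℝ) (1/2)}

/-- The generating set G(N) = ℤ^d ∩ N·[-1/2,1/2)^d. -/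
def genSet (N : Matrix (Fin d) (Fin d) ℤ) : Set (Fin d → ℤ) :=
  {h | ∃ y : Fin d → ℝ, (∀ i, y i ∈ Set.Ico (-(1/2) : ℝ) (1/2)) ∧
        (fun i => (h i : ℝ)) = mulVecR d N y}

/-- The fundamental cell [-π, π)^d of the torus. -/
def cube : Set (Fin d → ℝ) := Set.univ.pi fun _ => Set.Ico (-Real.pi) Real.pi

/-- Pairing of an integer frequency and a real point. -/
def dot (k : Fin d → ℤ) (x : Fin d → ℝ) : ℝ := ∑ i, (k i : ℝ) * x i

/-- A function on the torus: 2π-periodic in each coordinate. -/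
def TorusFun (f : (Fin d → ℝ) → ℂ) : Prop :=
  ∀ (x : Fin d → ℝ) (z : Fin d → ℤ), f (x + fun i => 2 * Real.pi * (z i : ℝ)) = f x

/-- The L²(𝕋^d) inner product (normalised). -/
def torusInner (f g : (Fin d → ℝ) → ℂ) : ℂ :=
  (((2 * Real.pi) ^ d : ℝ) : ℂ)⁻¹ * ∫ x in cube d, f x * (starRingEnd ℂ) (g x)

/-- Fourier coefficient c_k(f). -/
def fCoeff (f : (Fin d → ℝ) → ℂ) (k : Fin d → ℤ) : ℂ :=
  torusInner d f fun x => Complex.exp (Complex.I * (dot d k x : ℝ))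

/-- Membership in the Wiener algebra A(𝕋^d). -/
def InWiener (f : (Fin d → ℝ) → ℂ) : Prop :=
  Summable (fun k : Fin d → ℤ => ‖fCoeff d f k‖) ∧
    ∀ x, HasSum (fun k : Fin d → ℤ =>
      fCoeff d f k * Complex.exp (Complex.I * (dot d k x : ℝ))) (f x)

/-- The translate T(y)f = f(· - 2πy). -/
def Tr (y : Fin d → ℝ) (f : (Fin d → ℝ) → ℂ) : (Fin d → ℝ) → ℂ :=
  fun x => f (x - (2 * Real.pi) • y)

/-- The space of translates V_M^f, as a set of L² functions (a.e. equality on the cube). -/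
def spanTranslates (M : Matrix (Fin d) (Fin d) ℤ) (f : (Fin d → ℝ) → ℂ) :
    Set ((Fin d → ℝ) → ℂ) :=
  {g | ∃ a : (Fin d → ℝ) → ℂ,
      g =ᵐ[volume.restrict (cube d)] fun x => ∑ᶠ y ∈ pattern d M, a y * Tr d y f x}

/-- Orthonormality of the translates of f on the pattern. -/
def OrthonormalTranslates (M : Matrix (Fin d) (Fin d) ℤ) (f : (Fin d → ℝ) → ℂ) : Prop :=
  ∀ y ∈ pattern d M, ∀ y' ∈ pattern d M,
    torusInner d (Tr d y f) (Tr d y' f) = if y = y' then 1 else 0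

/-- A fundamental interpolant of V_M^f. -/
def IsFundamentalInterpolant (M : Matrix (Fin d) (Fin d) ℤ) (f Λ : (Fin d → ℝ) → ℂ) : Prop :=
  Λ ∈ spanTranslates d M f ∧
    ∀ y ∈ pattern d M,
      Λ ((2 * Real.pi) • y) = if ∃ z : Fin d → ℤ, y = fun i => (z i : ℝ) then 1 else 0

/-- Frobenius inner product of complex matrices. -/
def frobInner (A B : Matrix (Fin d) (Fin d) ℂ) : ℂ :=
  ∑ i, ∑ j, A i j * (starRingEnd ℂ) (B i j)

/-- Application of a fourth-order (real) tensor to a complex matrix. -/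
def capply (C : Fin d → Fin d → Fin d → Fin d → ℝ) (γ : Matrix (Fin d) (Fin d) ℂ) :
    Matrix (Fin d) (Fin d) ℂ :=
  Matrix.of fun i j => ∑ a, ∑ b, (C i j a b : ℂ) * γ a b

/-- The usual symmetries of a stiffness tensor. -/
def TensorSymm (C : Fin d → Fin d → Fin d → Fin d → ℝ) : Prop :=
  ∀ i j k l, C i j k l = C j i k l ∧ C i j k l = C i j l k ∧ C i j k l = C k l i j

/-- Positive definiteness of a reference stiffness on symmetric matrices. -/
def TensorPosDef (C : Fin d → Fin d → Fin d → Fin d → ℝ) : Prop :=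
  ∃ c : ℝ, 0 < c ∧ ∀ γ : Matrix (Fin d) (Fin d) ℂ, γ.IsSymm →
    c * ∑ i, ∑ j, Complex.normSq (γ i j) ≤ (frobInner d (capply d C γ) γ).re

/-- The symmetrised gradient D_k u = (i/2)(k uᵀ + u kᵀ). -/
def symGrad (k : Fin d → ℝ) (u : Fin d → ℂ) : Matrix (Fin d) (Fin d) ℂ :=
  Matrix.of fun i j => (Complex.I / 2) * ((k i : ℂ) * u j + u i * (k j : ℂ))

/-- The adjoint D_k* of the symmetrised gradient (w.r.t. Frobenius inner product). -/
def symGradAdj (k : Fin d → ℝ) (A : Matrix (Fin d) (Fin d) ℂ) : Fin d → ℂ :=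
  fun j => ∑ i, (-Complex.I / 2) * (k i : ℂ) * (A i j + A j i)

/-- The acoustic tensor A(k) = D_k* ∘ C⁰ ∘ D_k as a d×d complex matrix. -/
def acoustic (C0 : Fin d → Fin d → Fin d → Fin d → ℝ) (k : Fin d → ℝ) :
    Matrix (Fin d) (Fin d) ℂ :=
  Matrix.of fun i j => symGradAdj d k (capply d C0 (symGrad d k (Pi.single j 1))) i

/-- The Green operator symbol Γ̂⁰_k = D_k ∘ A(k)⁻¹ ∘ D_k* for real k ≠ 0. -/
def greenSymR (C0 : Fin d → Fin d → Fin d → Fin d → ℝ) (k : Fin d → ℝ)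
    (E : Matrix (Fin d) (Fin d) ℂ) : Matrix (Fin d) (Fin d) ℂ :=
  symGrad d k ((acoustic d C0 k)⁻¹.mulVec (symGradAdj d k E))

/-- The Green operator symbol for integer frequencies, Γ̂⁰_0 := 0. -/
def greenSymZ (C0 : Fin d → Fin d → Fin d → Fin d → ℝ) (k : Fin d → ℤ)
    (E : Matrix (Fin d) (Fin d) ℂ) : Matrix (Fin d) (Fin d) ℂ :=
  if k = 0 then 0 else greenSymR d C0 (fun i => (k i : ℝ)) E

/-- Entrywise Fourier coefficient of a matrix field. -/
def mFourier (ε : (Fin d → ℝ) → Matrix (Fin d) (Fin d) ℂ) (k : Fin d → ℤ) :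
    Matrix (Fin d) (Fin d) ℂ :=
  Matrix.of fun i j => fCoeff d (fun x => ε x i j) k

/-- The periodised Green symbol Γ̂^p_h = m Σ_z Γ̂⁰_{h+Mᵀz} |c_{h+Mᵀz}(f)|². -/
def gammaPSym (M : Matrix (Fin d) (Fin d) ℤ) (C0 : Fin d → Fin d → Fin d → Fin d → ℝ)
    (f : (Fin d → ℝ) → ℂ) (h : Fin d → ℤ) (E : Matrix (Fin d) (Fin d) ℂ) :
    Matrix (Fin d) (Fin d) ℂ :=
  (M.det.natAbs : ℂ) • ∑' z : Fin d → ℤ,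
    ((Complex.normSq (fCoeff d f (h + Matrix.mulVec Mᵀ z)) : ℝ) : ℂ) •
      greenSymZ d C0 (h + Matrix.mulVec Mᵀ z) E

/-- The periodised Green operator applied to a coefficient field: DFT, multiply, inverse DFT. -/
def gammaP (M : Matrix (Fin d) (Fin d) ℤ) (C0 : Fin d → Fin d → Fin d → Fin d → ℝ)
    (f : (Fin d → ℝ) → ℂ) (V : (Fin d → ℝ) → Matrix (Fin d) (Fin d) ℂ)
    (x : Fin d → ℝ) : Matrix (Fin d) (Fin d) ℂ :=
  ((M.det.natAbs : ℂ))⁻¹ • ∑ᶠ h ∈ genSet d Mᵀ,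
    Complex.exp (2 * Real.pi * Complex.I * (dot d h x : ℝ)) •
      gammaPSym d M C0 f h
        (∑ᶠ y ∈ pattern d M, Complex.exp (-(2 * Real.pi * Complex.I) * (dot d h y : ℝ)) • V y)

/-- The Dirichlet kernel D_M. -/
def dirichlet (M : Matrix (Fin d) (Fin d) ℤ) : (Fin d → ℝ) → ℂ :=
  fun x => ∑ᶠ h ∈ genSet d Mᵀ, Complex.exp (Complex.I * (dot d h x : ℝ))


section Aux13

variable {d}

def cvec (z : Fin d → ℤ) : Fin d → ℝ := fun i => (z i : ℝ)

lemma castMap_det (M : Matrix (Fin d) (Fin d) ℤ) (hM : M.det ≠ 0) :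
    (M.map (Int.cast : ℤ → ℝ)).det ≠ 0 := by
  have : (M.map (Int.cast : ℤ → ℝ)).det = ((M.det : ℤ) : ℝ) := by
    rw [show M.map (Int.cast : ℤ → ℝ) = (Int.castRingHom ℝ).mapMatrix M from rfl,
      ← RingHom.map_det]; rfl
  rw [this]; exact_mod_cast hM

lemma mulVecR_injective (M : Matrix (Fin d) (Fin d) ℤ) (hM : M.det ≠ 0) :
    Function.Injective ((M.map (Int.cast : ℤ → ℝ)).mulVec) := by
  intro u v huv
  have h1 := congrArg (fun w => (M.map (Int.cast : ℤ → ℝ))⁻¹.mulVec w) huv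
  simpa [Matrix.mulVec_mulVec,
    Matrix.nonsing_inv_mul _ (isUnit_iff_ne_zero.2 (castMap_det M hM)),
    Matrix.one_mulVec] using h1

lemma cvec_mulVec (M : Matrix (Fin d) (Fin d) ℤ) (w : Fin d → ℤ) :
    cvec (M.mulVec w) = (M.map (Int.cast : ℤ → ℝ)).mulVec (cvec w) := by
  funext i
  exact RingHom.map_mulVec (Int.castRingHom ℝ) M w i

lemma box_eq_of_sub_cvec {y y' : Fin d → ℝ}
    (hy : ∀ i, y i ∈ Set.Ico (-(1/2) : ℝ) (1/2)) (hy' : ∀ i, y' i ∈ Set.Ico (-(1/2) : ℝ) (1/2))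
    (z : Fin d → ℤ) (h : ∀ i, y i - y' i = (z i : ℝ)) : y = y' := by
  funext i
  obtain ⟨h1, h2⟩ := hy i
  obtain ⟨h3, h4⟩ := hy' i
  have hi := h i
  have hz1 : (-1 : ℝ) < (z i : ℝ) := by linarith
  have hz2 : ((z i : ℝ)) < 1 := by linarith
  have : z i = 0 := by
    have a1 : (-1 : ℤ) < z i := by exact_mod_cast hz1
    have a2 : z i < 1 := by exact_mod_cast hz2
    omega
  rw [this] at hi
  simpa using sub_eq_zero.1 (by simpa using hi)

/-- Componentwise fractional part into `[-1/2, 1/2)`. -/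
def fr (v : Fin d → ℝ) : Fin d → ℝ := fun i => Int.fract (v i + 1/2) - 1/2

lemma fr_mem_box (v : Fin d → ℝ) : ∀ i, fr v i ∈ Set.Ico (-(1/2) : ℝ) (1/2) := by
  intro i
  constructor
  · have := Int.fract_nonneg (v i + 1/2); simp only [fr]; linarith
  · have := Int.fract_lt_one (v i + 1/2); simp only [fr]; linarith

lemma sub_fr_eq (v : Fin d → ℝ) : v - fr v = cvec (fun i => ⌊v i + 1/2⌋) := by
  funext i
  simp only [Pi.sub_apply, fr, Int.fract, cvec]
  ring

lemma lattice_add {M : Matrix (Fin d) (Fin d) ℤ} {y y' : Fin d → ℝ}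
    (hy : y ∈ lattice d M) (hy' : y' ∈ lattice d M) : y + y' ∈ lattice d M := by
  obtain ⟨z, hz⟩ := hy; obtain ⟨z', hz'⟩ := hy'
  refine ⟨z + z', ?_⟩
  simp only [mulVecR] at *
  rw [Matrix.mulVec_add, hz, hz']
  funext i; simp [Pi.add_apply]

lemma lattice_neg {M : Matrix (Fin d) (Fin d) ℤ} {y : Fin d → ℝ}
    (hy : y ∈ lattice d M) : -y ∈ lattice d M := by
  obtain ⟨z, hz⟩ := hy
  refine ⟨-z, ?_⟩
  simp only [mulVecR] at *
  rw [Matrix.mulVec_neg, hz]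
  funext i; simp [Pi.neg_apply]

lemma cvec_mem_lattice (M : Matrix (Fin d) (Fin d) ℤ) (z : Fin d → ℤ) :
    cvec z ∈ lattice d M :=
  ⟨M.mulVec z, by rw [mulVecR, ← cvec_mulVec]; rfl⟩

lemma fr_mem_pattern {M : Matrix (Fin d) (Fin d) ℤ} {y : Fin d → ℝ}
    (hy : y ∈ lattice d M) : fr y ∈ pattern d M := by
  refine ⟨?_, fr_mem_box y⟩
  have : fr y = y + -(cvec fun i => ⌊y i + 1/2⌋) := by
    have := sub_fr_eq y
    funext i
    have := congrFun this i
    simp only [Pi.sub_apply] at this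
    simp only [Pi.add_apply, Pi.neg_apply]
    linarith
  rw [this]
  exact lattice_add hy (lattice_neg (cvec_mem_lattice M _))

lemma zero_mem_pattern (M : Matrix (Fin d) (Fin d) ℤ) : (0 : Fin d → ℝ) ∈ pattern d M := by
  refine ⟨⟨0, ?_⟩, fun i => by norm_num⟩
  funext i
  simp [mulVecR, Matrix.mulVec_zero]

lemma abs_le_rowsum {M : Matrix (Fin d) (Fin d) ℤ} {y : Fin d → ℝ} {z : Fin d → ℤ}
    (hy : ∀ i, y i ∈ Set.Ico (-(1/2) : ℝ) (1/2))
    (hz : (M.map (Int.cast : ℤ → ℝ)).mulVec y = cvec z) (i : Fin d) :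
    |z i| ≤ ∑ j, |M i j| := by
  have h1 : (z i : ℝ) = ∑ j, (M i j : ℝ) * y j := by
    have := congrFun hz i
    simp only [cvec] at this
    rw [← this]
    rfl
  have h2 : |(z i : ℝ)| ≤ ∑ j, |(M i j : ℝ)| := by
    rw [h1]
    refine (Finset.abs_sum_le_sum_abs _ _).trans (Finset.sum_le_sum fun j _ => ?_)
    rw [abs_mul]
    have hyj : |y j| ≤ 1 := by
      obtain ⟨a, b⟩ := hy j
      rw [abs_le]; constructor <;> linarith
    calc |(M i j : ℝ)| * |y j| ≤ |(M i j : ℝ)| * 1 :=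
          mul_le_mul_of_nonneg_left hyj (abs_nonneg _)
      _ = |(M i j : ℝ)| := mul_one _
  have h3 : |(z i : ℝ)| = ((|z i| : ℤ) : ℝ) := by push_cast; rfl
  have h4 : (∑ j, |(M i j : ℝ)|) = (((∑ j, |M i j| : ℤ)) : ℝ) := by push_cast; rfl
  rw [h3, h4] at h2
  exact_mod_cast h2

lemma pattern_finite (M : Matrix (Fin d) (Fin d) ℤ) (hM : M.det ≠ 0) :
    (pattern d M).Finite := by
  classical
  set B : Fin d → ℤ := fun i => ∑ j, |M i j| with hB
  set φ : (Fin d → ℝ) → (Fin d → ℤ) := fun y i => round (mulVecR d M y i) with hφ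
  have key : ∀ y ∈ pattern d M, (M.map (Int.cast : ℤ → ℝ)).mulVec y = cvec (φ y) := by
    rintro y ⟨⟨z, hz⟩, _⟩
    have hz' : (M.map (Int.cast : ℤ → ℝ)).mulVec y = cvec z := hz
    have : φ y = z := by
      funext i
      simp only [hφ, mulVecR, hz', cvec, round_intCast]
    rw [this]; exact hz'
  have hinj : Set.InjOn φ (pattern d M) := by
    intro y hy y' hy' hphi
    exact mulVecR_injective M hM (by rw [key y hy, key y' hy', hphi])
  refine Set.Finite.of_finite_image ?_ hinj
  refine Set.Finite.subset (Finset.finite_toSet (Finset.Icc (-B) B)) ?_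
  rintro z ⟨y, hy, rfl⟩
  simp only [Finset.coe_Icc, Set.mem_Icc, Pi.le_def]
  constructor <;> intro i
  · have := abs_le_rowsum hy.2 (key y hy) i
    simp only [abs_le] at this
    simpa [hB, Pi.neg_apply] using this.1
  · have := abs_le_rowsum hy.2 (key y hy) i
    simp only [abs_le] at this
    exact this.2

lemma genSet_finite (N : Matrix (Fin d) (Fin d) ℤ) : (genSet d N).Finite := by
  classical
  set B : Fin d → ℤ := fun i => ∑ j, |N i j| with hB
  refine Set.Finite.subset (Finset.finite_toSet (Finset.Icc (-B) B)) ?_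
  rintro h ⟨y, hy, hhy⟩
  have hz : (N.map (Int.cast : ℤ → ℝ)).mulVec y = cvec h := hhy.symm
  simp only [Finset.coe_Icc, Set.mem_Icc, Pi.le_def]
  constructor <;> intro i
  · have := abs_le_rowsum hy hz i
    simp only [abs_le] at this
    simpa [hB, Pi.neg_apply] using this.1
  · have := abs_le_rowsum hy hz i
    simp only [abs_le] at this
    exact this.2

/-! dot lemmas -/

lemma dot_add_right (k : Fin d → ℤ) (x y : Fin d → ℝ) :
    dot d k (x + y) = dot d k x + dot d k y := by
  simp only [dot, Pi.add_apply, mul_add, Finset.sum_add_distrib]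

lemma dot_sub_right (k : Fin d → ℤ) (x y : Fin d → ℝ) :
    dot d k (x - y) = dot d k x - dot d k y := by
  simp only [dot, Pi.sub_apply, mul_sub, Finset.sum_sub_distrib]

lemma dot_smul_right (k : Fin d → ℤ) (c : ℝ) (y : Fin d → ℝ) :
    dot d k (c • y) = c * dot d k y := by
  simp only [dot, Pi.smul_apply, smul_eq_mul, Finset.mul_sum]
  exact Finset.sum_congr rfl fun i _ => by ring

lemma dot_sub_left (k k' : Fin d → ℤ) (y : Fin d → ℝ) :
    dot d (k - k') y = dot d k y - dot d k' y := by
  simp only [dot, Pi.sub_apply, Int.cast_sub, sub_mul, Finset.sum_sub_distrib]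

lemma dot_cvec (k z : Fin d → ℤ) :
    dot d k (cvec z) = ((∑ i, k i * z i : ℤ) : ℝ) := by
  simp only [dot, cvec]
  push_cast
  rfl

lemma exists_lattice_not_int (M : Matrix (Fin d) (Fin d) ℤ) (hM : M.det ≠ 0)
    (k : Fin d → ℤ) (hk : ¬ ∃ w : Fin d → ℤ, k = Mᵀ.mulVec w) :
    ∃ y₀ ∈ lattice d M, ¬ ∃ n : ℤ, dot d k y₀ = (n : ℝ) := by
  by_contra hcon
  push_neg at hcon
  set A := M.map (Int.cast : ℤ → ℝ) with hA
  have hdet := castMap_det M hM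
  set u : Fin d → ℝ := cvec k with hu
  have hy : ∀ j, A⁻¹.mulVec (Pi.single j 1) ∈ lattice d M := by
    intro j
    refine ⟨Pi.single j 1, ?_⟩
    show A.mulVec (A⁻¹.mulVec (Pi.single j 1)) = _
    rw [Matrix.mulVec_mulVec, Matrix.mul_nonsing_inv _ (isUnit_iff_ne_zero.2 hdet),
      Matrix.one_mulVec]
    funext i
    by_cases hij : i = j <;> simp [Pi.single_apply, hij]
  choose n hn using fun j => hcon _ (hy j)
  apply hk
  refine ⟨n, ?_⟩
  have hcn : cvec n = u ᵥ* A⁻¹ := by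
    funext j
    have hdot : dot d k (A⁻¹.mulVec (Pi.single j 1)) = (u ᵥ* A⁻¹) j := by
      rw [Matrix.mulVec_single_one]
      simp only [dot, Matrix.vecMul, dotProduct, hu, cvec, mul_one, Matrix.col_apply]
    have := hn j
    rw [hdot] at this
    exact this.symm
  have hreal : cvec (Mᵀ.mulVec n) = cvec k := by
    rw [cvec_mulVec, Matrix.transpose_map, ← hA, Matrix.mulVec_transpose, hcn,
      Matrix.vecMul_vecMul, Matrix.nonsing_inv_mul _ (isUnit_iff_ne_zero.2 hdet),
      Matrix.vecMul_one]
  funext i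
  have := congrFun hreal i
  simp only [cvec] at this
  exact_mod_cast this.symm

lemma char_sum_eq_zero (M : Matrix (Fin d) (Fin d) ℤ) (hM : M.det ≠ 0)
    (k : Fin d → ℤ) (hk : ¬ ∃ w : Fin d → ℤ, k = Mᵀ.mulVec w) :
    ∑ y ∈ (pattern_finite M hM).toFinset,
      Complex.exp ((2 * Real.pi * Complex.I) * ((dot d k y : ℝ) : ℂ)) = 0 := by
  classical
  obtain ⟨y₀, hy₀, hnint⟩ := exists_lattice_not_int M hM k hk
  set Pf := (pattern_finite M hM).toFinset with hPf
  set χ : (Fin d → ℝ) → ℂ :=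
    fun y => Complex.exp ((2 * Real.pi * Complex.I) * ((dot d k y : ℝ) : ℂ)) with hχ
  set ε : ℂ := χ y₀ with hε
  have hexp_int : ∀ m : ℤ, Complex.exp ((2 * Real.pi * Complex.I) * ((m : ℝ) : ℂ)) = 1 := by
    intro m
    rw [show ((2 : ℂ) * Real.pi * Complex.I) * ((m : ℝ) : ℂ)
        = (m : ℂ) * (2 * Real.pi * Complex.I) by push_cast; ring]
    exact Complex.exp_int_mul_two_pi_mul_I m
  have hεne : ε ≠ 1 := by
    intro h1
    apply hnint
    rw [hε, hχ, Complex.exp_eq_one_iff] at h1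
    obtain ⟨m, hm⟩ := h1
    refine ⟨m, ?_⟩
    have h2 : ((dot d k y₀ : ℝ) : ℂ) * (2 * Real.pi * Complex.I)
        = (m : ℂ) * (2 * Real.pi * Complex.I) := by rw [← hm]; ring
    have hne : (2 * (Real.pi : ℂ) * Complex.I) ≠ 0 := by
      simp [Real.pi_ne_zero, Complex.I_ne_zero, Complex.ofReal_ne_zero]
    have := mul_right_cancel₀ hne h2
    exact_mod_cast this
  have hmem : ∀ y ∈ Pf, y ∈ pattern d M := fun y hy => (pattern_finite M hM).mem_toFinset.1 hy
  -- shift map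
  set σ : (Fin d → ℝ) → (Fin d → ℝ) := fun y => fr (y + y₀) with hσ
  set τ : (Fin d → ℝ) → (Fin d → ℝ) := fun y => fr (y + -y₀) with hτ
  have hσmem : ∀ y ∈ Pf, σ y ∈ Pf := by
    intro y hy
    exact (pattern_finite M hM).mem_toFinset.2
      (fr_mem_pattern (lattice_add (hmem y hy).1 hy₀))
  have hτmem : ∀ y ∈ Pf, τ y ∈ Pf := by
    intro y hy
    exact (pattern_finite M hM).mem_toFinset.2
      (fr_mem_pattern (lattice_add (hmem y hy).1 (lattice_neg hy₀)))
  have hcancel : ∀ {y y' : Fin d → ℝ}, y ∈ pattern d M → y' ∈ pattern d M →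
      (∃ z : Fin d → ℤ, ∀ i, y i - y' i = (z i : ℝ)) → y = y' := by
    rintro y y' hy hy' ⟨z, hz⟩
    exact box_eq_of_sub_cvec hy.2 hy'.2 z hz
  have hfr_sub : ∀ v : Fin d → ℝ, ∃ z : Fin d → ℤ, ∀ i, v i - fr v i = (z i : ℝ) := by
    intro v
    exact ⟨fun i => ⌊v i + 1/2⌋, fun i => congrFun (sub_fr_eq v) i⟩
  have hinv1 : ∀ y ∈ Pf, τ (σ y) = y := by
    intro y hy
    refine hcancel ((pattern_finite M hM).mem_toFinset.1 (hτmem _ (hσmem y hy)))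
      (hmem y hy) ?_
    obtain ⟨z1, hz1⟩ := hfr_sub (y + y₀)
    obtain ⟨z2, hz2⟩ := hfr_sub (σ y + -y₀)
    refine ⟨fun i => -(z2 i) - z1 i, fun i => ?_⟩
    have e1 := hz1 i
    have e2 := hz2 i
    simp only [hσ, hτ, Pi.add_apply, Pi.neg_apply] at e1 e2 ⊢
    push_cast
    linarith
  have hinv2 : ∀ y ∈ Pf, σ (τ y) = y := by
    intro y hy
    refine hcancel ((pattern_finite M hM).mem_toFinset.1 (hσmem _ (hτmem y hy)))
      (hmem y hy) ?_
    obtain ⟨z1, hz1⟩ := hfr_sub (y + -y₀)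
    obtain ⟨z2, hz2⟩ := hfr_sub (τ y + y₀)
    refine ⟨fun i => -(z2 i) - z1 i, fun i => ?_⟩
    have e1 := hz1 i
    have e2 := hz2 i
    simp only [hσ, hτ, Pi.add_apply, Pi.neg_apply] at e1 e2 ⊢
    push_cast
    linarith
  have hshift : ∀ y ∈ Pf, χ (σ y) = ε * χ y := by
    intro y hy
    obtain ⟨z1, hz1⟩ := hfr_sub (y + y₀)
    have hdotσ : dot d k (σ y) = dot d k y + dot d k y₀ - ((∑ i, k i * z1 i : ℤ) : ℝ) := by
      have : σ y = (y + y₀) - cvec z1 := by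
        funext i
        have := hz1 i
        simp only [hσ, Pi.sub_apply, Pi.add_apply, cvec] at this ⊢
        linarith
      rw [this, dot_sub_right, dot_add_right, dot_cvec]
    rw [hχ]
    simp only
    rw [hdotσ]
    rw [show (((dot d k y + dot d k y₀ - ((∑ i, k i * z1 i : ℤ) : ℝ)) : ℝ) : ℂ)
        = ((dot d k y : ℝ) : ℂ) + ((dot d k y₀ : ℝ) : ℂ)
          + (((-∑ i, k i * z1 i : ℤ) : ℝ) : ℂ) by push_cast; ring]
    rw [mul_add, mul_add, Complex.exp_add, Complex.exp_add, hexp_int, mul_one, hε, hχ]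
    ring
  have hreindex : ∑ y ∈ Pf, χ y = ∑ y ∈ Pf, χ (σ y) :=
    Finset.sum_nbij' τ σ hτmem hσmem hinv2 hinv1 (fun y hy => by rw [hinv2 y hy])
  have hsum : ∑ y ∈ Pf, χ y = ε * ∑ y ∈ Pf, χ y := by
    conv_lhs => rw [hreindex, Finset.sum_congr rfl hshift]
    rw [← Finset.mul_sum]
  have h0 : (ε - 1) * ∑ y ∈ Pf, χ y = 0 := by
    rw [sub_mul, one_mul, ← hsum, sub_self]
  rcases mul_eq_zero.1 h0 with h | h
  · exact absurd (sub_eq_zero.1 h) hεne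
  · exact h


lemma dirichlet_eq_sum (M : Matrix (Fin d) (Fin d) ℤ) (v : Fin d → ℝ) :
    dirichlet d M v = ∑ h ∈ (genSet_finite (d := d) Mᵀ).toFinset,
      Complex.exp (Complex.I * ((dot d h v : ℝ) : ℂ)) := by
  rw [dirichlet, finsum_mem_eq_finite_toFinset_sum _ (genSet_finite (d := d) Mᵀ)]

lemma expand_translates (M : Matrix (Fin d) (Fin d) ℤ) (hM : M.det ≠ 0)
    (a : (Fin d → ℝ) → ℂ) (x : Fin d → ℝ) :
    ∑ y ∈ (pattern_finite M hM).toFinset, a y * Tr d y (dirichlet d M) x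
      = ∑ h ∈ (genSet_finite (d := d) Mᵀ).toFinset,
          (∑ y ∈ (pattern_finite M hM).toFinset,
            a y * Complex.exp (-(2 * Real.pi * Complex.I) * ((dot d h y : ℝ) : ℂ)))
            * Complex.exp (Complex.I * ((dot d h x : ℝ) : ℂ)) := by
  have hterm : ∀ (y : Fin d → ℝ) (h : Fin d → ℤ),
      Complex.exp (Complex.I * ((dot d h (x - (2 * Real.pi) • y) : ℝ) : ℂ))
        = Complex.exp (-(2 * Real.pi * Complex.I) * ((dot d h y : ℝ) : ℂ))
          * Complex.exp (Complex.I * ((dot d h x : ℝ) : ℂ)) := by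
    intro y h
    rw [← Complex.exp_add]
    congr 1
    rw [dot_sub_right, dot_smul_right]
    push_cast
    ring
  calc ∑ y ∈ (pattern_finite M hM).toFinset, a y * Tr d y (dirichlet d M) x
      = ∑ y ∈ (pattern_finite M hM).toFinset, ∑ h ∈ (genSet_finite (d := d) Mᵀ).toFinset,
          a y * (Complex.exp (-(2 * Real.pi * Complex.I) * ((dot d h y : ℝ) : ℂ))
            * Complex.exp (Complex.I * ((dot d h x : ℝ) : ℂ))) := by
        refine Finset.sum_congr rfl fun y _ => ?_
        rw [show Tr d y (dirichlet d M) x = dirichlet d M (x - (2 * Real.pi) • y) from rfl,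
          dirichlet_eq_sum, Finset.mul_sum]
        exact Finset.sum_congr rfl fun h _ => by rw [hterm]
    _ = _ := by
        rw [Finset.sum_comm]
        refine Finset.sum_congr rfl fun h _ => ?_
        rw [Finset.sum_mul]
        exact Finset.sum_congr rfl fun y _ => by ring

lemma ortho_sum (M : Matrix (Fin d) (Fin d) ℤ) (hM : M.det ≠ 0)
    {h h' : Fin d → ℤ} (hh : h ∈ genSet d Mᵀ) (hh' : h' ∈ genSet d Mᵀ) :
    ∑ y ∈ (pattern_finite M hM).toFinset,
      Complex.exp ((2 * Real.pi * Complex.I) * ((dot d (h' - h) y : ℝ) : ℂ))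
      = if h' = h then (((pattern_finite M hM).toFinset.card : ℕ) : ℂ) else 0 := by
  by_cases he : h' = h
  · subst he
    rw [if_pos rfl]
    have : ∀ y ∈ (pattern_finite M hM).toFinset,
        Complex.exp ((2 * Real.pi * Complex.I) * ((dot d (h' - h') y : ℝ) : ℂ)) = 1 := by
      intro y _
      simp [dot]
    rw [Finset.sum_congr rfl this, Finset.sum_const, nsmul_eq_mul, mul_one]
  · rw [if_neg he]
    refine char_sum_eq_zero M hM (h' - h) ?_
    rintro ⟨w, hw⟩
    apply he
    obtain ⟨y, hy, hhy⟩ := hh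
    obtain ⟨y', hy', hhy'⟩ := hh'
    have hdetT : Mᵀ.det ≠ 0 := by rwa [Matrix.det_transpose]
    have e1 : (Mᵀ.map (Int.cast : ℤ → ℝ)).mulVec (y' - y) = cvec (h' - h) := by
      rw [Matrix.mulVec_sub]
      funext i
      have a1 := congrFun hhy i
      have a2 := congrFun hhy' i
      simp only [mulVecR] at a1 a2
      simp only [Pi.sub_apply, cvec, ← a1, ← a2]
      push_cast
      ring
    have e2 : (Mᵀ.map (Int.cast : ℤ → ℝ)).mulVec (cvec w) = cvec (h' - h) := by
      rw [← cvec_mulVec, ← hw]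
    have e3 : y' - y = cvec w := mulVecR_injective Mᵀ hdetT (by rw [e1, e2])
    have e4 : y' = y := box_eq_of_sub_cvec hy' hy w fun i => by
      have := congrFun e3 i
      simpa [cvec] using this
    funext i
    have b1 := congrFun hhy i
    have b2 := congrFun hhy' i
    rw [e4] at b2
    have : ((h' i : ℝ)) = (h i : ℝ) := by rw [b1, b2]
    exact_mod_cast this

end Aux13

/-- the span of Dirichlet kernel translates is the space of trigonometric
polynomials with frequencies in the generating set. -/
theorem spanTranslates_dirichlet_eq_trigPoly
    (d : ℕ) (hd : 0 < d)
    (M : Matrix (Fin d) (Fin d) ℤ) (hM : M.det ≠ 0) :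
    spanTranslates d M (dirichlet d M) =
      {g | ∃ b : (Fin d → ℤ) → ℂ,
        g =ᵐ[volume.restrict (cube d)]
          fun x => ∑ᶠ h ∈ genSet d Mᵀ, b h * Complex.exp (Complex.I * (dot d h x : ℝ))} := by
  classical
  ext g
  simp only [spanTranslates, Set.mem_setOf_eq]
  constructor
  · rintro ⟨a, ha⟩
    refine ⟨fun h => ∑ y ∈ (pattern_finite M hM).toFinset,
      a y * Complex.exp (-(2 * Real.pi * Complex.I) * ((dot d h y : ℝ) : ℂ)), ?_⟩
    refine ha.trans (Filter.EventuallyEq.of_eq ?_)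
    funext x
    rw [finsum_mem_eq_finite_toFinset_sum _ (pattern_finite M hM),
      finsum_mem_eq_finite_toFinset_sum _ (genSet_finite (d := d) Mᵀ),
      expand_translates M hM a x]
  · rintro ⟨b, hb⟩
    have h0P : (0 : Fin d → ℝ) ∈ (pattern_finite M hM).toFinset :=
      (pattern_finite M hM).mem_toFinset.2 (zero_mem_pattern M)
    have hcard : (((pattern_finite M hM).toFinset.card : ℕ) : ℂ) ≠ 0 := by
      have := Finset.card_ne_zero_of_mem h0P
      exact_mod_cast this
    refine ⟨fun y => (((pattern_finite M hM).toFinset.card : ℕ) : ℂ)⁻¹ *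
      ∑ h' ∈ (genSet_finite (d := d) Mᵀ).toFinset,
        b h' * Complex.exp ((2 * Real.pi * Complex.I) * ((dot d h' y : ℝ) : ℂ)), ?_⟩
    refine hb.trans (Filter.EventuallyEq.of_eq ?_)
    funext x
    rw [finsum_mem_eq_finite_toFinset_sum _ (pattern_finite M hM),
      finsum_mem_eq_finite_toFinset_sum _ (genSet_finite (d := d) Mᵀ),
      expand_translates M hM _ x]
    refine Finset.sum_congr rfl fun h hh => ?_
    congr 1
    have hEE : ∀ (h' : Fin d → ℤ) (y : Fin d → ℝ),
        Complex.exp ((2 * Real.pi * Complex.I) * ((dot d h' y : ℝ) : ℂ))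
          * Complex.exp (-(2 * Real.pi * Complex.I) * ((dot d h y : ℝ) : ℂ))
        = Complex.exp ((2 * Real.pi * Complex.I) * ((dot d (h' - h) y : ℝ) : ℂ)) := by
      intro h' y
      rw [← Complex.exp_add]
      congr 1
      rw [dot_sub_left]
      push_cast
      ring
    symm
    calc ∑ y ∈ (pattern_finite M hM).toFinset,
          ((((pattern_finite M hM).toFinset.card : ℕ) : ℂ)⁻¹ *
            ∑ h' ∈ (genSet_finite (d := d) Mᵀ).toFinset,
              b h' * Complex.exp ((2 * Real.pi * Complex.I) * ((dot d h' y : ℝ) : ℂ)))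
            * Complex.exp (-(2 * Real.pi * Complex.I) * ((dot d h y : ℝ) : ℂ))
        = ∑ y ∈ (pattern_finite M hM).toFinset, ∑ h' ∈ (genSet_finite (d := d) Mᵀ).toFinset,
            (((pattern_finite M hM).toFinset.card : ℕ) : ℂ)⁻¹ *
              (b h' * Complex.exp ((2 * Real.pi * Complex.I) * ((dot d (h' - h) y : ℝ) : ℂ))) := by
          refine Finset.sum_congr rfl fun y _ => ?_
          rw [mul_assoc, Finset.sum_mul, Finset.mul_sum]
          exact Finset.sum_congr rfl fun h' _ => by rw [mul_assoc, hEE]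
      _ = ∑ h' ∈ (genSet_finite (d := d) Mᵀ).toFinset, ∑ y ∈ (pattern_finite M hM).toFinset,
            (((pattern_finite M hM).toFinset.card : ℕ) : ℂ)⁻¹ *
              (b h' * Complex.exp ((2 * Real.pi * Complex.I) * ((dot d (h' - h) y : ℝ) : ℂ))) :=
          Finset.sum_comm
      _ = ∑ h' ∈ (genSet_finite (d := d) Mᵀ).toFinset, if h' = h then b h' else 0 := by
          refine Finset.sum_congr rfl fun h' hh' => ?_
          rw [← Finset.mul_sum, ← Finset.mul_sum,
            ortho_sum M hM ((genSet_finite (d := d) Mᵀ).mem_toFinset.1 hh)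
              ((genSet_finite (d := d) Mᵀ).mem_toFinset.1 hh')]
          by_cases he : h' = h
          · rw [if_pos he, if_pos he]
            field_simp
          · rw [if_neg he, if_neg he, mul_zero, mul_zero]
      _ = b h := by
          rw [Finset.sum_ite_eq' (genSet_finite (d := d) Mᵀ).toFinset h b]
          exact if_pos hh

end ElastFFT
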